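/- Let Θ be a set, θ₀ ∈ Θ, and for every pair of integers 1 ≤ m ≤ n′ let C_{n′}^{(m)} ⊆ Θ be an arbitrary subset. For each m ≥ 1 define N^{(m)} := inf{n′ − m + 1 : n′ ≥ m and θ₀ ∉ C_{n′}^{(m)}} ∈ ℕ ∪ {∞}, and define N* := inf_{m ≥ 1} (N^{(m)} + m − 1). Define τ := inf{n ≥ 1 : {θ₀} ∩ ⋂_{m=1}^n ⋂_{n′=m}^n C_{n′}^{(m)} = ∅}. Then N* = τ. -/

import Mathlib

open Set

/-- **Lorden's repeated-test detection time equals the repeated-FCS-detector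
stopping time.**
Let `Θ` be a set, `θ₀ ∈ Θ`, and `C m n' ⊆ Θ` arbitrary subsets (for `1 ≤ m ≤ n'`). For
each `m ≥ 1` let `N m = inf {n' - m + 1 : n' ≥ m, θ₀ ∉ C m n'} ∈ ℕ ∪ {∞}` be the stopping
time of the sequential test started at time `m`, let `N* = inf_{m ≥ 1} (N m + m - 1)` be
Lorden's detection time, and let
`τ = inf {n ≥ 1 : {θ₀} ∩ ⋂_{m=1}^n ⋂_{n'=m}^n C m n' = ∅}`. Then `N* = τ`. -/
theorem stmt12_lorden_equals_repeated_FCS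
    {Θ : Type*} (θ₀ : Θ) (C : ℕ → ℕ → Set Θ)
    (N : ℕ → ℕ∞)
    (hN : ∀ m : ℕ, N m =
      sInf ((fun k : ℕ => (k : ℕ∞)) ''
        {k : ℕ | ∃ n' : ℕ, m ≤ n' ∧ θ₀ ∉ C m n' ∧ k = n' - m + 1}))
    (Nstar : ℕ∞)
    (hNstar : Nstar = ⨅ m ∈ {m : ℕ | 1 ≤ m}, N m + (m : ℕ∞) - 1)
    (τ : ℕ∞)
    (hτ : τ = sInf ((fun n : ℕ => (n : ℕ∞)) ''
      {n : ℕ | 1 ≤ n ∧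
        ({θ₀} : Set Θ) ∩ ⋂ m ∈ Finset.Icc 1 n, ⋂ n' ∈ Finset.Icc m n, C m n' = ∅})) :
    Nstar = τ := by
  subst hNstar hτ
  apply le_antisymm
  · -- Nstar ≤ τ
    apply le_sInf
    rintro x ⟨n, ⟨hn1, hempty⟩, rfl⟩
    have hθ : θ₀ ∉ ⋂ m ∈ Finset.Icc 1 n, ⋂ n' ∈ Finset.Icc m n, C m n' := by
      intro h
      have : θ₀ ∈ ({θ₀} : Set Θ) ∩ ⋂ m ∈ Finset.Icc 1 n, ⋂ n' ∈ Finset.Icc m n, C m n' :=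
        ⟨rfl, h⟩
      rw [hempty] at this
      exact this
    simp only [Set.mem_iInter, not_forall, Finset.mem_Icc] at hθ
    obtain ⟨m, ⟨hm1, hmn⟩, n', ⟨hmn', hn'n⟩, hC⟩ := hθ
    have step1 : (⨅ m ∈ {m : ℕ | 1 ≤ m}, N m + (m : ℕ∞) - 1) ≤ N m + (m : ℕ∞) - 1 :=
      iInf₂_le m hm1
    have hk : N m ≤ ((n' - m + 1 : ℕ) : ℕ∞) := by
      rw [hN m]
      exact sInf_le ⟨n' - m + 1, ⟨n', hmn', hC, rfl⟩, rfl⟩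
    have step2 : N m + (m : ℕ∞) - 1 ≤ ((n' - m + 1 : ℕ) : ℕ∞) + (m : ℕ∞) - 1 :=
      tsub_le_tsub_right (add_le_add_left hk _) 1
    have step3 : ((n' - m + 1 : ℕ) : ℕ∞) + (m : ℕ∞) - 1 = (n' : ℕ∞) := by
      have h : n' - m + 1 + m = n' + 1 := by omega
      rw [← Nat.cast_add, h]
      simpa using (ENat.coe_sub (n' + 1) 1).symm
    calc (⨅ m ∈ {m : ℕ | 1 ≤ m}, N m + (m : ℕ∞) - 1)
        ≤ (n' : ℕ∞) := by rw [← step3]; exact le_trans step1 step2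
      _ ≤ (n : ℕ∞) := by exact_mod_cast hn'n
  · -- τ ≤ Nstar
    apply le_iInf₂
    intro m hm1
    by_cases hA : {k : ℕ | ∃ n' : ℕ, m ≤ n' ∧ θ₀ ∉ C m n' ∧ k = n' - m + 1}.Nonempty
    · set A := {k : ℕ | ∃ n' : ℕ, m ≤ n' ∧ θ₀ ∉ C m n' ∧ k = n' - m + 1} with hAdef
      obtain ⟨n', hmn', hC, hk⟩ := Nat.sInf_mem hA
      have hNm : N m = ((sInf A : ℕ) : ℕ∞) := by
        rw [hN m]
        apply le_antisymm
        · exact sInf_le ⟨sInf A, Nat.sInf_mem hA, rfl⟩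
        · apply le_sInf
          rintro x ⟨j, hj, rfl⟩
          exact Nat.cast_le.mpr (Nat.sInf_le hj)
      have heq : N m + (m : ℕ∞) - 1 = (n' : ℕ∞) := by
        have h : sInf A + m = n' + 1 := by omega
        rw [hNm, ← Nat.cast_add, h]
        simpa using (ENat.coe_sub (n' + 1) 1).symm
      rw [heq]
      apply sInf_le
      refine ⟨n', ⟨le_trans hm1 hmn', ?_⟩, rfl⟩
      rw [Set.eq_empty_iff_forall_notMem]
      rintro x ⟨hx1, hx2⟩
      rw [Set.mem_singleton_iff] at hx1
      subst hx1
      simp only [Set.mem_iInter, Finset.mem_Icc] at hx2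
      exact hC (hx2 m ⟨hm1, hmn'⟩ n' ⟨hmn', le_refl n'⟩)
    · have : N m = ⊤ := by
        rw [hN m, Set.not_nonempty_iff_eq_empty.mp hA, Set.image_empty, sInf_empty]
      rw [this]
      simp
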